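/- If m is a supermodular game, then the core of m equals the Weber set of m, i.e., C(m) is the convex hull of the marginal vectors x^m(τ,·) over all enumerations τ of N. -/

import Mathlib

open Finset

/-- A game is supermodular if `m A + m B ≤ m (A ∪ B) + m (A ∩ B)` for all `A, B`. -/
def Supermod {N : Type*} [DecidableEq N] (m : Finset N → ℝ) : Prop :=
  ∀ A B : Finset N, m A + m B ≤ m (A ∪ B) + m (A ∩ B)

/-- The initial segment `{π 0, ..., π (k-1)}` of the enumeration `π`. -/
def seg {N : Type*} [Fintype N] [DecidableEq N] (π : Fin (Fintype.card N) ≃ N) (k : ℕ) :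
    Finset N :=
  (Finset.univ.filter (fun j : Fin (Fintype.card N) => (j : ℕ) < k)).image π

/-- The marginal vector `x^m(π,·)` of the game `m` w.r.t. the enumeration `π`. -/
def marg {N : Type*} [Fintype N] [DecidableEq N] (m : Finset N → ℝ)
    (π : Fin (Fintype.card N) ≃ N) (i : N) : ℝ :=
  m (seg π ((π.symm i : ℕ) + 1)) - m (seg π ((π.symm i : ℕ)))

/-- The core of a game. -/
def core {N : Type*} [Fintype N] [DecidableEq N] (m : Finset N → ℝ) : Set (N → ℝ) :=
  {v | ∑ i, v i = m Finset.univ ∧ ∀ S : Finset N, m S ≤ ∑ i ∈ S, v i}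

section aux

variable {N : Type*} [Fintype N] [DecidableEq N]

lemma mem_seg (π : Fin (Fintype.card N) ≃ N) (k : ℕ) (i : N) :
    i ∈ seg π k ↔ ((π.symm i : ℕ) < k) := by
  simp only [seg, Finset.mem_image, Finset.mem_filter, Finset.mem_univ, true_and]
  constructor
  · rintro ⟨j, hj, rfl⟩; simpa using hj
  · intro h; exact ⟨π.symm i, h, by simp⟩

lemma seg_zero (π : Fin (Fintype.card N) ≃ N) : seg π 0 = ∅ := by
  ext i; simp [mem_seg]

lemma seg_top (π : Fin (Fintype.card N) ≃ N) {k : ℕ} (hk : Fintype.card N ≤ k) :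
    seg π k = Finset.univ := by
  ext i; simp only [mem_seg, Finset.mem_univ, iff_true]
  exact lt_of_lt_of_le (π.symm i).2 hk

lemma seg_succ (π : Fin (Fintype.card N) ≃ N) {k : ℕ} (hk : k < Fintype.card N) :
    seg π (k + 1) = insert (π ⟨k, hk⟩) (seg π k) := by
  ext i
  simp only [mem_seg, Finset.mem_insert, Nat.lt_succ_iff_lt_or_eq]
  constructor
  · rintro (h | h)
    · exact Or.inr h
    · left
      have : π.symm i = ⟨k, hk⟩ := Fin.ext h
      rw [← this]; simp
  · rintro (rfl | h)
    · right; simp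
    · exact Or.inl h

lemma not_mem_seg (π : Fin (Fintype.card N) ≃ N) {k : ℕ} (hk : k < Fintype.card N) :
    π ⟨k, hk⟩ ∉ seg π k := by
  simp [mem_seg]

lemma marg_apply (m : Finset N → ℝ) (π : Fin (Fintype.card N) ≃ N) (j : Fin (Fintype.card N)) :
    marg m π (π j) = m (seg π ((j : ℕ) + 1)) - m (seg π (j : ℕ)) := by
  simp [marg]

lemma sum_marg (m : Finset N → ℝ) (hm : m ∅ = 0) (π : Fin (Fintype.card N) ≃ N) :
    ∑ i, marg m π i = m Finset.univ := by
  rw [← Equiv.sum_comp π (marg m π)]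
  have : ∀ j : Fin (Fintype.card N), marg m π (π j)
      = (fun k => m (seg π k)) ((j : ℕ) + 1) - (fun k => m (seg π k)) (j : ℕ) :=
    fun j => marg_apply m π j
  rw [Finset.sum_congr rfl (fun j _ => this j)]
  rw [Fin.sum_univ_eq_sum_range (fun k => (fun k => m (seg π k)) (k + 1) - (fun k => m (seg π k)) k)]
  rw [Finset.sum_range_sub (fun k => m (seg π k))]
  rw [seg_zero, seg_top π le_rfl, hm, sub_zero]

lemma marg_superadd (m : Finset N → ℝ) (hm : m ∅ = 0) (hsup : Supermod m) (π : Fin (Fintype.card N) ≃ N)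
    (S : Finset N) : m S ≤ ∑ i ∈ S, marg m π i := by
  have key : ∀ k : ℕ, m (S ∩ seg π k) ≤ ∑ i ∈ S ∩ seg π k, marg m π i := by
    intro k
    induction k with
    | zero => simp [seg_zero, Finset.inter_empty, hm]
    | succ k ih =>
      by_cases hk : k < Fintype.card N
      · rw [seg_succ π hk]
        by_cases hS : π ⟨k, hk⟩ ∈ S
        · have hins : S ∩ insert (π ⟨k, hk⟩) (seg π k)
              = insert (π ⟨k, hk⟩) (S ∩ seg π k) := by
            ext i
            simp only [Finset.mem_inter, Finset.mem_insert]
            constructor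
            · rintro ⟨hiS, (rfl | hi)⟩
              · exact Or.inl rfl
              · exact Or.inr ⟨hiS, hi⟩
            · rintro (rfl | ⟨h1, h2⟩)
              · exact ⟨hS, Or.inl rfl⟩
              · exact ⟨h1, Or.inr h2⟩
          rw [hins]
          have hnot : π ⟨k, hk⟩ ∉ S ∩ seg π k := by
            intro h; exact not_mem_seg π hk (Finset.mem_inter.1 h).2
          rw [Finset.sum_insert hnot]
          have hmarg : marg m π (π ⟨k, hk⟩) = m (seg π (k+1)) - m (seg π k) := by
            simpa using marg_apply m π ⟨k, hk⟩
          have hsm := hsup (insert (π ⟨k, hk⟩) (S ∩ seg π k)) (seg π k)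
          have hU : insert (π ⟨k, hk⟩) (S ∩ seg π k) ∪ seg π k = seg π (k+1) := by
            rw [seg_succ π hk]
            ext i
            simp only [Finset.mem_union, Finset.mem_insert, Finset.mem_inter]
            tauto
          have hI : insert (π ⟨k, hk⟩) (S ∩ seg π k) ∩ seg π k = S ∩ seg π k := by
            ext i
            simp only [Finset.mem_inter, Finset.mem_insert]
            constructor
            · rintro ⟨(rfl | ⟨h1, h2⟩), hseg⟩
              · exact absurd hseg (not_mem_seg π hk)
              · exact ⟨h1, hseg⟩
            · rintro ⟨h1, h2⟩; exact ⟨Or.inr ⟨h1, h2⟩, h2⟩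
          rw [hU, hI] at hsm
          have : m (insert (π ⟨k, hk⟩) (S ∩ seg π k))
              ≤ m (S ∩ seg π k) + (m (seg π (k+1)) - m (seg π k)) := by linarith
          calc m (insert (π ⟨k, hk⟩) (S ∩ seg π k))
              ≤ m (S ∩ seg π k) + (m (seg π (k+1)) - m (seg π k)) := this
            _ ≤ (∑ i ∈ S ∩ seg π k, marg m π i) + marg m π (π ⟨k, hk⟩) := by
                rw [hmarg]; linarith
            _ = marg m π (π ⟨k, hk⟩) + ∑ i ∈ S ∩ seg π k, marg m π i := by ring
        · have : S ∩ insert (π ⟨k, hk⟩) (seg π k) = S ∩ seg π k := by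
            ext i
            simp only [Finset.mem_inter, Finset.mem_insert]
            constructor
            · rintro ⟨hiS, (rfl | hi)⟩
              · exact absurd hiS hS
              · exact ⟨hiS, hi⟩
            · rintro ⟨h1, h2⟩; exact ⟨h1, Or.inr h2⟩
          rw [this]; exact ih
      · have : seg π (k + 1) = seg π k := by
          rw [seg_top π (Nat.le_of_not_lt hk), seg_top π (by omega)]
        rw [this]; exact ih
  have := key (Fintype.card N)
  rwa [seg_top π le_rfl, Finset.inter_univ] at this

lemma abel_aux (d H : ℕ → ℝ) (hH : ∀ k, 0 ≤ H k) (hH0 : H 0 = 0) :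
    ∀ j, (∀ k, k + 1 < j → d (k + 1) ≤ d k) → 0 < j →
      d (j - 1) * H j ≤ ∑ k ∈ Finset.range j, d k * (H (k + 1) - H k) := by
  intro j
  induction j with
  | zero => intro _ h; exact absurd h (lt_irrefl 0)
  | succ j ih =>
    intro hd _
    rcases Nat.eq_zero_or_pos j with rfl | hj
    · simp [hH0]
    · have hdd : ∀ k, k + 1 < j → d (k + 1) ≤ d k := fun k hk => hd k (by omega)
      have ihj := ih hdd hj
      rw [Finset.sum_range_succ]
      have hdj : d j ≤ d (j - 1) := by
        have : (j - 1) + 1 < j + 1 := by omega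
        have := hd (j - 1) this
        rwa [Nat.sub_add_cancel hj] at this
      have h1 : d j * H j ≤ d (j - 1) * H j := mul_le_mul_of_nonneg_right hdj (hH j)
      have : (j + 1) - 1 = j := by omega
      rw [this]
      nlinarith [hH j, hH (j + 1)]
end aux

/-- For a supermodular game, the core equals the Weber set, i.e. the convex hull
of the marginal vectors. -/
theorem stmt6 {N : Type*} [Fintype N] [DecidableEq N]
    (m : Finset N → ℝ) (hm : m ∅ = 0) (hsup : Supermod m) :
    core m = convexHull ℝ {v : N → ℝ | ∃ τ : Fin (Fintype.card N) ≃ N, v = marg m τ} := by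
  set W : Set (N → ℝ) := {v : N → ℝ | ∃ τ : Fin (Fintype.card N) ≃ N, v = marg m τ} with hW
  have hWfin : W.Finite := by
    have : W = Set.range (fun τ : Fin (Fintype.card N) ≃ N => marg m τ) := by
      ext v; simp [hW, Set.mem_setOf_eq, eq_comm]
    rw [this]; exact Set.finite_range _
  have hcore_convex : Convex ℝ (core m) := by
    intro x hx y hy a b ha hb hab
    constructor
    · have : ∑ i, (a • x + b • y) i = a * ∑ i, x i + b * ∑ i, y i := by
        simp [Finset.mul_sum, Finset.sum_add_distrib]
      rw [this, hx.1, hy.1, ← add_mul, hab, one_mul]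
    · intro S
      have : ∑ i ∈ S, (a • x + b • y) i = a * ∑ i ∈ S, x i + b * ∑ i ∈ S, y i := by
        simp [Finset.mul_sum, Finset.sum_add_distrib]
      rw [this]
      calc m S = a * m S + b * m S := by rw [← add_mul, hab, one_mul]
        _ ≤ a * ∑ i ∈ S, x i + b * ∑ i ∈ S, y i :=
            add_le_add (mul_le_mul_of_nonneg_left (hx.2 S) ha)
              (mul_le_mul_of_nonneg_left (hy.2 S) hb)
  apply Set.Subset.antisymm
  · -- core ⊆ hull: separation
    intro v hv
    by_contra hvW
    obtain ⟨f, u, hfv, hfW⟩ := geometric_hahn_banach_point_closed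
      (convex_convexHull ℝ W) (hWfin.isClosed_convexHull ℝ) hvW
    set n := Fintype.card N with hn
    set c : N → ℝ := fun i => f (Pi.single i (1 : ℝ)) with hc
    have hf_eq : ∀ w : N → ℝ, f w = ∑ i, c i * w i := by
      intro w
      have hw : w = ∑ i, w i • (Pi.single i 1 : N → ℝ) := by
        ext j
        rw [Finset.sum_apply]
        simp [Pi.single_apply]
      calc f w = f (∑ i, w i • (Pi.single i 1 : N → ℝ)) := by rw [← hw]
        _ = ∑ i, w i * f (Pi.single i (1 : ℝ)) := by
            rw [map_sum]; refine Finset.sum_congr rfl (fun i _ => ?_); simp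
        _ = ∑ i, c i * w i := by refine Finset.sum_congr rfl (fun i _ => ?_); ring
    -- sort by c descending
    set e : N ≃ Fin n := Fintype.equivFin N with he
    set σ : Equiv.Perm (Fin n) := Tuple.sort (fun j => -c (e.symm j)) with hσ
    set τ : Fin n ≃ N := σ.trans e.symm with hτ
    have hmono : Monotone ((fun j => -c (e.symm j)) ∘ σ) := Tuple.monotone_sort _
    have hanti : ∀ j k : Fin n, j ≤ k → c (τ k) ≤ c (τ j) := by
      intro j k hjk
      have := hmono hjk
      simp only [Function.comp_apply] at this
      have : -c (τ j) ≤ -c (τ k) := this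
      linarith
    -- reindexed functions
    set F : ℕ → ℝ := fun k => m (seg τ k) with hF
    set G : ℕ → ℝ := fun k => ∑ i ∈ seg τ k, v i with hG
    set H : ℕ → ℝ := fun k => G k - F k with hHdef
    set d : ℕ → ℝ := fun k => if h : k < n then c (τ ⟨k, h⟩) else 0 with hd
    have hGsucc : ∀ (k : ℕ) (hk : k < n), G (k + 1) - G k = v (τ ⟨k, hk⟩) := by
      intro k hk
      have := seg_succ τ hk
      rw [hG]
      simp only
      rw [this, Finset.sum_insert (not_mem_seg τ hk)]
      ring
    have hfmarg : f (marg m τ) = ∑ k ∈ Finset.range n, d k * (F (k + 1) - F k) := by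
      rw [hf_eq]
      rw [← Equiv.sum_comp τ (fun i => c i * marg m τ i)]
      have : ∀ j : Fin n, c (τ j) * marg m τ (τ j)
          = (fun k => d k * (F (k + 1) - F k)) (j : ℕ) := by
        intro j
        simp only
        rw [marg_apply m τ j, hd]
        simp only [j.2, dif_pos]
        rfl
      rw [Finset.sum_congr rfl (fun j _ => this j)]
      exact Fin.sum_univ_eq_sum_range (fun k => d k * (F (k + 1) - F k)) n
    have hfv : f v = ∑ k ∈ Finset.range n, d k * (G (k + 1) - G k) := by
      rw [hf_eq]
      rw [← Equiv.sum_comp τ (fun i => c i * v i)]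
      have : ∀ j : Fin n, c (τ j) * v (τ j)
          = (fun k => d k * (G (k + 1) - G k)) (j : ℕ) := by
        intro j
        simp only
        rw [hGsucc (j : ℕ) j.2, hd]
        simp only [j.2, dif_pos]
      rw [Finset.sum_congr rfl (fun j _ => this j)]
      exact Fin.sum_univ_eq_sum_range (fun k => d k * (G (k + 1) - G k)) n
    have hH0 : H 0 = 0 := by
      simp [hHdef, hG, hF, seg_zero, hm]
    have hHn : H n = 0 := by
      simp only [hHdef, hG, hF, seg_top τ (le_refl n)]
      rw [hv.1]; ring
    have hHnn : ∀ k, 0 ≤ H k := by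
      intro k
      simp only [hHdef, hG, hF]
      have := hv.2 (seg τ k)
      linarith
    have hdanti : ∀ k, k + 1 < n → d (k + 1) ≤ d k := by
      intro k hk
      rw [hd]
      simp only [hk, dif_pos, (by omega : k < n), dif_pos]
      exact hanti ⟨k, by omega⟩ ⟨k + 1, hk⟩ (by simp [Fin.le_def])
    have hle : f (marg m τ) ≤ f v := by
      rcases Nat.eq_zero_or_pos n with h0 | hpos
      · rw [hfmarg, hfv, h0]
        simp
      · have habel := abel_aux d H hHnn hH0 n hdanti hpos
        rw [hHn] at habel
        simp only [mul_zero] at habel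
        have hsplit : ∑ k ∈ Finset.range n, d k * (H (k + 1) - H k)
            = (∑ k ∈ Finset.range n, d k * (G (k + 1) - G k))
              - ∑ k ∈ Finset.range n, d k * (F (k + 1) - F k) := by
          rw [← Finset.sum_sub_distrib]
          refine Finset.sum_congr rfl (fun k _ => ?_)
          simp only [hHdef]; ring
        rw [hfmarg, hfv]
        linarith [habel, hsplit.symm ▸ habel]
    have hmargW : marg m τ ∈ convexHull ℝ W := by
      apply subset_convexHull
      exact ⟨τ, rfl⟩
    have := hfW _ hmargW
    linarith
  · -- hull ⊆ core
    apply convexHull_min _ hcore_convex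
    rintro v ⟨τ, rfl⟩
    exact ⟨sum_marg m hm τ, marg_superadd m hm hsup τ⟩
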